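/- arXiv:math/0502168 — 11 statements merged into one kernel-verified Lean document; each statement's English description precedes it below -/
import Mathlib

section
/- If K is a topological ring whose group of units K× is dense in K and open, and inversion is continuous, then the ring of dual numbers K[ε] (with the product topology) is again a topological ring whose group of units is dense and open, and inversion on units is continuous. -/
open TrivSqZeroExt
open scoped RightActions

/-- If `K` is a topological ring whose unit group is open and dense and with continuous
inversion, then the dual numbers `K[ε]` form a topological ring whose unit group is
open and dense and with continuous inversion. -/
theorem dualNumber_topologicalRing_units_dense_open
    {K : Type*} [CommRing K] [TopologicalSpace K] [IsTopologicalRing K] [T2Space K]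
    (hopen : IsOpen {x : K | IsUnit x})
    (hdense : Dense {x : K | IsUnit x})
    (hinv : ContinuousOn (Ring.inverse : K → K) {x : K | IsUnit x}) :
    IsTopologicalRing (DualNumber K) ∧
    IsOpen {z : DualNumber K | IsUnit z} ∧
    Dense {z : DualNumber K | IsUnit z} ∧
    ContinuousOn (Ring.inverse : DualNumber K → DualNumber K) {z : DualNumber K | IsUnit z} := by
  have hset : {z : DualNumber K | IsUnit z}
      = (TrivSqZeroExt.fst : DualNumber K → K) ⁻¹' {x : K | IsUnit x} := by
    ext z
    exact TrivSqZeroExt.isUnit_iff_isUnit_fst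
  have hfstopen : IsOpenMap (TrivSqZeroExt.fst : DualNumber K → K) := isOpenMap_fst
  refine ⟨inferInstance, ?_, ?_, ?_⟩
  · rw [hset]
    exact hopen.preimage TrivSqZeroExt.continuous_fst
  · rw [hset]
    exact hdense.preimage hfstopen
  · have key : ∀ z : DualNumber K, IsUnit z →
        Ring.inverse z = TrivSqZeroExt.inl (Ring.inverse z.fst)
          + TrivSqZeroExt.inr (-(Ring.inverse z.fst * z.snd * Ring.inverse z.fst)) := by
      intro z hz
      have hf : IsUnit z.fst := TrivSqZeroExt.isUnit_iff_isUnit_fst.mp hz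
      obtain ⟨i⟩ := hf.nonempty_invertible
      letI := i
      letI := TrivSqZeroExt.invertibleOfInvertibleFst z
      rw [Ring.inverse_invertible, Ring.inverse_invertible]
      ext
      · rw [TrivSqZeroExt.fst_add, TrivSqZeroExt.fst_inl, TrivSqZeroExt.fst_inr, add_zero]
        rfl
      · rw [TrivSqZeroExt.snd_add, TrivSqZeroExt.snd_inl, TrivSqZeroExt.snd_inr, zero_add]
        show -(⅟z.fst •> z.snd <• ⅟z.fst) = _
        rw [op_smul_eq_mul, smul_eq_mul]
    have hfc : ContinuousOn (fun z : DualNumber K => Ring.inverse z.fst)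
        {z : DualNumber K | IsUnit z} := by
      refine hinv.comp TrivSqZeroExt.continuous_fst.continuousOn ?_
      intro z hz
      exact TrivSqZeroExt.isUnit_iff_isUnit_fst.mp hz
    refine ContinuousOn.congr ?_ (fun z hz => key z hz)
    exact ((TrivSqZeroExt.continuous_inl (R := K) (M := K)).comp_continuousOn hfc).add
      ((TrivSqZeroExt.continuous_inr (R := K) (M := K)).comp_continuousOn
        (((hfc.mul TrivSqZeroExt.continuous_snd.continuousOn).mul hfc).neg))
end

section
/- Let V, W be topological modules over a topological ring K with dense unit group, U ⊆ V open, and f : U → W of class C¹ in the sense that there is a continuous map f^[1] : U^[1] → W with f(x+tv) − f(x) = t·f^[1](x,v,t) for all (x,v,t) with x, x+tv ∈ U. Then for each x ∈ U the differential df(x) : V → W, v ↦ f^[1](x,v,0), is additive: df(x)(v+w) = df(x)v + df(x)w. -/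
/-- In the Bertram–Glöckner–Neeb calculus over a topological ring `K` with dense unit
group, the differential `df(x) v = f^[1](x,v,0)` of a `C¹`-map is additive. -/
theorem differential_additive
    {K : Type*} [CommRing K] [TopologicalSpace K] [IsTopologicalRing K]
    {V W : Type*}
    [AddCommGroup V] [Module K V] [TopologicalSpace V]
    [IsTopologicalAddGroup V] [ContinuousSMul K V]
    [AddCommGroup W] [Module K W] [TopologicalSpace W]
    [IsTopologicalAddGroup W] [ContinuousSMul K W] [T2Space W]
    (hdense : Dense {t : K | IsUnit t})
    {U : Set V} (hU : IsOpen U)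
    (f : V → W) (f1 : V × V × K → W)
    (hcont : ContinuousOn f1 {p : V × V × K | p.1 ∈ U ∧ p.1 + p.2.2 • p.2.1 ∈ U})
    (hdiff : ∀ (x v : V) (t : K), x ∈ U → x + t • v ∈ U →
      f (x + t • v) - f x = t • f1 (x, v, t)) :
    ∀ x ∈ U, ∀ v w : V, f1 (x, v + w, 0) = f1 (x, v, 0) + f1 (x, w, 0) := by
  intro x hx v w
  set S : Set (V × V × K) := {p : V × V × K | p.1 ∈ U ∧ p.1 + p.2.2 • p.2.1 ∈ U} with hS
  set O : Set K := {t : K | x + t • v ∈ U ∧ x + t • v + t • w ∈ U ∧ x + t • (v + w) ∈ U}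
    with hO
  have hOopen : IsOpen O := by
    apply IsOpen.inter
    · exact (hU.preimage (by fun_prop : Continuous fun t : K => x + t • v))
    · exact IsOpen.inter
        (hU.preimage (by fun_prop : Continuous fun t : K => x + t • v + t • w))
        (hU.preimage (by fun_prop : Continuous fun t : K => x + t • (v + w)))
  have h0O : (0 : K) ∈ O := by simp [hO, hx]
  set g : K → W := fun t => f1 (x, v + w, t) with hg
  set h : K → W := fun t => f1 (x, v, t) + f1 (x + t • v, w, t) with hh
  have hgc : ContinuousOn g O := by
    apply hcont.comp (by fun_prop : Continuous fun t : K => ((x, v + w, t) : V × V × K)).continuousOn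
    intro t ht
    exact ⟨hx, ht.2.2⟩
  have hhc : ContinuousOn h O := by
    apply ContinuousOn.add
    · apply hcont.comp (by fun_prop : Continuous fun t : K => ((x, v, t) : V × V × K)).continuousOn
      intro t ht
      exact ⟨hx, ht.1⟩
    · apply hcont.comp
        (by fun_prop : Continuous fun t : K => ((x + t • v, w, t) : V × V × K)).continuousOn
      intro t ht
      exact ⟨ht.1, ht.2.1⟩
  have heq : ∀ t ∈ O ∩ {t : K | IsUnit t}, g t = h t := by
    rintro t ⟨⟨h1, h2, h3⟩, hu⟩
    have e1 := hdiff x (v + w) t hx h3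
    have e2 := hdiff x v t hx h1
    have e3 := hdiff (x + t • v) w t h1 h2
    have key : t • g t = t • h t := by
      rw [hg, hh, smul_add, ← e1, ← e2, ← e3]
      rw [smul_add, ← add_assoc]
      abel
    obtain ⟨u, rfl⟩ := hu
    exact smul_left_cancel u (by simpa [Units.smul_def] using key)
  -- pass to the limit t → 0
  have hcl : (0 : K) ∈ closure (O ∩ {t : K | IsUnit t}) := by
    have := hdense.open_subset_closure_inter hOopen
    exact this h0O
  have hne : (nhdsWithin (0 : K) (O ∩ {t : K | IsUnit t})).NeBot :=
    mem_closure_iff_nhdsWithin_neBot.mp hcl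
  have hgt : Filter.Tendsto g (nhdsWithin (0 : K) (O ∩ {t : K | IsUnit t})) (nhds (g 0)) :=
    ((hgc 0 h0O).mono Set.inter_subset_left)
  have hht : Filter.Tendsto h (nhdsWithin (0 : K) (O ∩ {t : K | IsUnit t})) (nhds (h 0)) :=
    ((hhc 0 h0O).mono Set.inter_subset_left)
  have hgh : g 0 = h 0 := by
    refine tendsto_nhds_unique (hgt.congr' ?_) hht
    filter_upwards [self_mem_nhdsWithin] with t ht using heq t ht
  simpa [hg, hh] using hgh
end

section
/- Under the same C¹ setting, the differential df(x) is homogeneous: df(x)(rv) = r·df(x)v for all r ∈ K, v ∈ V; hence df(x) is K-linear. -/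
open Filter Topology

/-- In the Bertram–Glöckner–Neeb calculus over a topological ring `K` with dense unit
group, the differential `df(x) v = f^[1](x,v,0)` of a `C¹`-map is homogeneous,
hence `K`-linear. -/
theorem differential_homogeneous_and_linear
    {K : Type*} [CommRing K] [TopologicalSpace K] [IsTopologicalRing K]
    {V W : Type*}
    [AddCommGroup V] [Module K V] [TopologicalSpace V]
    [IsTopologicalAddGroup V] [ContinuousSMul K V]
    [AddCommGroup W] [Module K W] [TopologicalSpace W]
    [IsTopologicalAddGroup W] [ContinuousSMul K W] [T2Space W]
    (hdense : Dense {t : K | IsUnit t})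
    {U : Set V} (hU : IsOpen U)
    (f : V → W) (f1 : V × V × K → W)
    (hcont : ContinuousOn f1 {p : V × V × K | p.1 ∈ U ∧ p.1 + p.2.2 • p.2.1 ∈ U})
    (hdiff : ∀ (x v : V) (t : K), x ∈ U → x + t • v ∈ U →
      f (x + t • v) - f x = t • f1 (x, v, t)) :
    ∀ x ∈ U,
      (∀ (r : K) (v : V), f1 (x, r • v, 0) = r • f1 (x, v, 0)) ∧
      ∃ L : V →ₗ[K] W, ∀ v : V, L v = f1 (x, v, 0) := by
  intro x hx
  set S : Set K := {t : K | IsUnit t} with hS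
  set D : Set (V × V × K) := {p : V × V × K | p.1 ∈ U ∧ p.1 + p.2.2 • p.2.1 ∈ U} with hDdef
  have hD : IsOpen D := by
    have hEq : D = (fun p : V × V × K => (p.1, p.1 + p.2.2 • p.2.1)) ⁻¹' (U ×ˢ U) := rfl
    rw [hEq]
    exact (hU.prod hU).preimage (by fun_prop)
  haveI hNB : (𝓝[S] (0 : K)).NeBot :=
    mem_closure_iff_nhdsWithin_neBot.mp (hdense 0)
  have hmem : ∀ v : V, ((x, v, (0 : K)) : V × V × K) ∈ D := fun v => ⟨hx, by simpa using hx⟩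
  have hca : ∀ v : V, ContinuousAt f1 (x, v, 0) := fun v =>
    hcont.continuousAt (hD.mem_nhds (hmem v))
  have hT : ∀ v : V, ∀ᶠ t in 𝓝 (0 : K), x + t • v ∈ U := by
    intro v
    have hc : ContinuousAt (fun t : K => x + t • v) 0 := by fun_prop
    have h0 : x + (0 : K) • v ∈ U := by simpa using hx
    exact hc (hU.mem_nhds h0)
  -- homogeneity
  have hhom : ∀ (r : K) (v : V), f1 (x, r • v, 0) = r • f1 (x, v, 0) := by
    intro r v
    have hg : Tendsto (fun t : K => f1 (x, r • v, t)) (𝓝[S] 0) (𝓝 (f1 (x, r • v, 0))) := by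
      have hin : Continuous fun t : K => ((x, r • v, t) : V × V × K) := by fun_prop
      exact ((hca (r • v)).tendsto.comp (hin.continuousAt (x := 0))).mono_left nhdsWithin_le_nhds
    have hh : Tendsto (fun t : K => r • f1 (x, v, t * r)) (𝓝[S] 0) (𝓝 (r • f1 (x, v, 0))) := by
      have hca' : ContinuousAt f1 (x, v, 0 * r) := by rw [zero_mul]; exact hca v
      have hin : Continuous fun t : K => ((x, v, t * r) : V × V × K) := by fun_prop
      have h1 : ContinuousAt (fun t : K => r • f1 (x, v, t * r)) 0 := by
        have := hca'.tendsto.comp (hin.continuousAt (x := 0))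
        exact (ContinuousAt.const_smul this r : _)
      have h2 := h1.tendsto.mono_left (nhdsWithin_le_nhds (s := S))
      simpa [zero_mul] using h2
    have heq : (fun t : K => f1 (x, r • v, t)) =ᶠ[𝓝[S] 0] fun t => r • f1 (x, v, t * r) := by
      filter_upwards [nhdsWithin_le_nhds (hT (r • v)), self_mem_nhdsWithin] with t hm ht
      have hm2 : x + (t * r) • v ∈ U := by rwa [← smul_smul]
      have h1 := hdiff x (r • v) t hx hm
      have h2 := hdiff x v (t * r) hx hm2
      have h3 : t • f1 (x, r • v, t) = t • (r • f1 (x, v, t * r)) := by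
        rw [smul_smul t r (f1 (x, v, t * r)), ← h2, ← h1, smul_smul]
      exact (ht.smul_left_cancel).mp h3
    exact tendsto_nhds_unique_of_eventuallyEq hg hh heq
  -- additivity
  have hadd : ∀ v w : V, f1 (x, v + w, 0) = f1 (x, v, 0) + f1 (x, w, 0) := by
    intro v w
    have hg : Tendsto (fun t : K => f1 (x, v + w, t)) (𝓝[S] 0) (𝓝 (f1 (x, v + w, 0))) := by
      have hin : Continuous fun t : K => ((x, v + w, t) : V × V × K) := by fun_prop
      exact ((hca (v + w)).tendsto.comp (hin.continuousAt (x := 0))).mono_left nhdsWithin_le_nhds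
    have hh : Tendsto (fun t : K => f1 (x, v, t) + f1 (x + t • v, w, t)) (𝓝[S] 0)
        (𝓝 (f1 (x, v, 0) + f1 (x, w, 0))) := by
      have ha : ContinuousAt (fun t : K => f1 (x, v, t)) 0 := by
        have hin : Continuous fun t : K => ((x, v, t) : V × V × K) := by fun_prop
        exact (hca v).tendsto.comp (hin.continuousAt (x := 0))
      have hb : ContinuousAt (fun t : K => f1 (x + t • v, w, t)) 0 := by
        have hin : Continuous fun t : K => ((x + t • v, w, t) : V × V × K) := by fun_prop
        have hca' : ContinuousAt f1 (x + (0 : K) • v, w, 0) := by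
          simpa using hca w
        exact hca'.tendsto.comp (hin.continuousAt (x := 0))
      have h1 := (ha.add hb).tendsto.mono_left (nhdsWithin_le_nhds (s := S))
      simpa [Pi.add_def] using h1
    have heq : (fun t : K => f1 (x, v + w, t)) =ᶠ[𝓝[S] 0]
        fun t => f1 (x, v, t) + f1 (x + t • v, w, t) := by
      filter_upwards [nhdsWithin_le_nhds (hT v), nhdsWithin_le_nhds (hT (v + w)),
        self_mem_nhdsWithin] with t hm1 hm2 ht
      have hm3 : x + t • v + t • w ∈ U := by rwa [add_assoc, ← smul_add]
      have h1 := hdiff x (v + w) t hx hm2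
      have h2 := hdiff x v t hx hm1
      have h3 := hdiff (x + t • v) w t hm1 hm3
      have h4 : t • f1 (x, v + w, t) = t • (f1 (x, v, t) + f1 (x + t • v, w, t)) := by
        rw [smul_add, ← h3, ← h2, ← h1, add_assoc, ← smul_add]
        abel
      exact (ht.smul_left_cancel).mp h4
    exact tendsto_nhds_unique_of_eventuallyEq hg hh heq
  refine ⟨hhom, ⟨{ toFun := fun v => f1 (x, v, 0),
                   map_add' := hadd,
                   map_smul' := fun r v => hhom r v }, fun v => rfl⟩⟩
end

section
/- If f : U → W and g : U' → W' are of class C¹ (over a topological ring K with dense unit group) with f(U) ⊆ U', then g ∘ f is of class C¹ with (g∘f)^[1](x,y,t) = g^[1](f(x), f^[1](x,y,t), t); in particular d(g∘f)(x) = dg(f(x)) ∘ df(x). -/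
/-- Chain rule in the Bertram–Glöckner–Neeb calculus: if `f` and `g` are of class `C¹`
and composable, then `g ∘ f` is of class `C¹` with
`(g∘f)^[1](x,y,t) = g^[1](f(x), f^[1](x,y,t), t)`;
in particular `d(g∘f)(x) = dg(f(x)) ∘ df(x)`. -/
theorem chain_rule_C1
    {K : Type*} [CommRing K] [TopologicalSpace K] [IsTopologicalRing K]
    {V W W' : Type*}
    [AddCommGroup V] [Module K V] [TopologicalSpace V]
    [IsTopologicalAddGroup V] [ContinuousSMul K V]
    [AddCommGroup W] [Module K W] [TopologicalSpace W]
    [IsTopologicalAddGroup W] [ContinuousSMul K W] [T2Space W]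
    [AddCommGroup W'] [Module K W'] [TopologicalSpace W']
    [IsTopologicalAddGroup W'] [ContinuousSMul K W'] [T2Space W']
    (hdense : Dense {t : K | IsUnit t})
    {U : Set V} (hU : IsOpen U) {U' : Set W} (hU' : IsOpen U')
    (f : V → W) (f1 : V × V × K → W)
    (g : W → W') (g1 : W × W × K → W')
    (hmaps : Set.MapsTo f U U')
    (hfc : ContinuousOn f U) (hgc : ContinuousOn g U')
    (hf1c : ContinuousOn f1 {p : V × V × K | p.1 ∈ U ∧ p.1 + p.2.2 • p.2.1 ∈ U})
    (hg1c : ContinuousOn g1 {p : W × W × K | p.1 ∈ U' ∧ p.1 + p.2.2 • p.2.1 ∈ U'})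
    (hfd : ∀ (x v : V) (t : K), x ∈ U → x + t • v ∈ U →
      f (x + t • v) - f x = t • f1 (x, v, t))
    (hgd : ∀ (x v : W) (t : K), x ∈ U' → x + t • v ∈ U' →
      g (x + t • v) - g x = t • g1 (x, v, t)) :
    ContinuousOn (fun p : V × V × K => g1 (f p.1, f1 p, p.2.2))
      {p : V × V × K | p.1 ∈ U ∧ p.1 + p.2.2 • p.2.1 ∈ U} ∧
    (∀ (x v : V) (t : K), x ∈ U → x + t • v ∈ U →
      g (f (x + t • v)) - g (f x) = t • g1 (f x, f1 (x, v, t), t)) := by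

  have key : ∀ p : V × V × K, p.1 ∈ U → p.1 + p.2.2 • p.2.1 ∈ U →
      f p.1 + p.2.2 • f1 p = f (p.1 + p.2.2 • p.2.1) := by
    rintro ⟨x, v, t⟩ hx hxt
    have := hfd x v t hx hxt
    simp only at this ⊢
    rw [← this]; abel
  constructor
  · apply ContinuousOn.comp hg1c
    · apply ContinuousOn.prodMk
      · exact hfc.comp continuousOn_fst (fun p hp => hp.1)
      · apply ContinuousOn.prodMk hf1c
        exact (continuous_snd.comp continuous_snd).continuousOn
    · rintro ⟨x, v, t⟩ ⟨hx, hxt⟩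
      refine ⟨hmaps hx, ?_⟩
      simpa using (key (x, v, t) hx hxt ▸ hmaps hxt)
  · intro x v t hx hxt
    have hfx : f x ∈ U' := hmaps hx
    have hkey := key (x, v, t) hx hxt
    simp only at hkey
    have hxt' : f x + t • f1 (x, v, t) ∈ U' := hkey ▸ hmaps hxt
    have := hgd (f x) (f1 (x, v, t)) t hfx hxt'
    rw [hkey] at this
    linear_combination (norm := abel) this
end

section
/- If f : U → W is of class C² over a topological ring K with dense unit group, then second partial derivatives commute: ∂_v ∂_w f(x) = ∂_w ∂_v f(x) for all x ∈ U and v, w ∈ V. -/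
/-- Schwarz' lemma in the Bertram–Glöckner–Neeb calculus: for a `C²`-map `f`, second
partial derivatives commute: `∂_v ∂_w f(x) = ∂_w ∂_v f(x)`, i.e.
`f^[2]((x,v,0),(w,0,0),0) = f^[2]((x,w,0),(v,0,0),0)`. -/
theorem second_partials_commute
    {K : Type*} [CommRing K] [TopologicalSpace K] [IsTopologicalRing K]
    {V W : Type*}
    [AddCommGroup V] [Module K V] [TopologicalSpace V]
    [IsTopologicalAddGroup V] [ContinuousSMul K V]
    [AddCommGroup W] [Module K W] [TopologicalSpace W]
    [IsTopologicalAddGroup W] [ContinuousSMul K W] [T2Space W]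
    (hdense : Dense {t : K | IsUnit t})
    {U : Set V} (hU : IsOpen U)
    (f : V → W) (f1 : V × V × K → W)
    (f2 : (V × V × K) × (V × V × K) × K → W)
    (hf1c : ContinuousOn f1 {p : V × V × K | p.1 ∈ U ∧ p.1 + p.2.2 • p.2.1 ∈ U})
    (hf1d : ∀ (x v : V) (t : K), x ∈ U → x + t • v ∈ U →
      f (x + t • v) - f x = t • f1 (x, v, t))
    (hf2c : ContinuousOn f2 {q : (V × V × K) × (V × V × K) × K |
      (q.1.1 ∈ U ∧ q.1.1 + q.1.2.2 • q.1.2.1 ∈ U) ∧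
      ((q.1 + q.2.2 • q.2.1).1 ∈ U ∧
        (q.1 + q.2.2 • q.2.1).1 + (q.1 + q.2.2 • q.2.1).2.2 • (q.1 + q.2.2 • q.2.1).2.1 ∈ U)})
    (hf2d : ∀ (p q : V × V × K) (t : K),
      (p.1 ∈ U ∧ p.1 + p.2.2 • p.2.1 ∈ U) →
      ((p + t • q).1 ∈ U ∧ (p + t • q).1 + (p + t • q).2.2 • (p + t • q).2.1 ∈ U) →
      f1 (p + t • q) - f1 p = t • f2 (p, q, t)) :
    ∀ x ∈ U, ∀ v w : V,
      f2 ((x, v, 0), (w, 0, 0), 0) = f2 ((x, w, 0), (v, 0, 0), 0) := by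

  intro x hx v w
  -- The set of parameter pairs (s, t) where all relevant points lie in U
  set S : Set (K × K) :=
    {p : K × K | x + p.1 • v ∈ U ∧ x + p.2 • w ∈ U ∧ x + p.2 • w + p.1 • v ∈ U} with hSdef
  have hSopen : IsOpen S := by
    have h1 : Continuous fun p : K × K => x + p.1 • v := by fun_prop
    have h2 : Continuous fun p : K × K => x + p.2 • w := by fun_prop
    have h3 : Continuous fun p : K × K => x + p.2 • w + p.1 • v := by fun_prop
    exact (hU.preimage h1).inter ((hU.preimage h2).inter (hU.preimage h3))
  have h0S : ((0 : K), (0 : K)) ∈ S := by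
    simp [hSdef, hx]
  set g : K × K → W := fun p => f2 ((x, v, p.1), (w, 0, 0), p.2) with hgdef
  set h : K × K → W := fun p => f2 ((x, w, p.2), (v, 0, 0), p.1) with hhdef
  have hg : ContinuousOn g S := by
    have hφ : Continuous fun p : K × K =>
        (((x, v, p.1), (w, (0 : V), (0 : K)), p.2) : (V × V × K) × (V × V × K) × K) := by
      fun_prop
    refine hf2c.comp hφ.continuousOn ?_
    rintro ⟨s, t⟩ ⟨h1, h2, h3⟩
    refine ⟨⟨hx, h1⟩, ?_, ?_⟩ <;>
      simpa [Prod.smul_mk, Prod.mk_add_mk] using (by assumption : _)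
  have hh : ContinuousOn h S := by
    have hφ : Continuous fun p : K × K =>
        (((x, w, p.2), (v, (0 : V), (0 : K)), p.1) : (V × V × K) × (V × V × K) × K) := by
      fun_prop
    refine hf2c.comp hφ.continuousOn ?_
    rintro ⟨s, t⟩ ⟨h1, h2, h3⟩
    have h3' : x + s • v + t • w ∈ U := by rwa [add_right_comm]
    refine ⟨⟨hx, h2⟩, ?_, ?_⟩ <;>
      simpa [Prod.smul_mk, Prod.mk_add_mk] using (by assumption : _)
  have hcancel : ∀ a : K, IsUnit a → ∀ b c : W, a • b = a • c → b = c := by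
    rintro a ⟨u, rfl⟩ b c hbc
    have := congrArg (fun z => (↑u⁻¹ : K) • z) hbc
    simpa [smul_smul] using this
  -- On pairs of units, g and h agree
  have key : ∀ p ∈ S, IsUnit p.1 → IsUnit p.2 → g p = h p := by
    rintro ⟨s, t⟩ ⟨h1, h2, h3⟩ hs ht
    have h3' : x + s • v + t • w ∈ U := by rwa [add_right_comm]
    have e1 : ((x, v, s) : V × V × K) + t • ((w, 0, 0) : V × V × K) = (x + t • w, v, s) := by
      simp [Prod.ext_iff]
    have e2 : ((x, w, t) : V × V × K) + s • ((v, 0, 0) : V × V × K) = (x + s • v, w, t) := by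
      simp [Prod.ext_iff]
    have d1 := hf2d (x, v, s) (w, 0, 0) t ⟨hx, h1⟩ (by rw [e1]; exact ⟨h2, h3⟩)
    rw [e1] at d1
    have d2 := hf2d (x, w, t) (v, 0, 0) s ⟨hx, h2⟩ (by rw [e2]; exact ⟨h1, h3'⟩)
    rw [e2] at d2
    have a1 := hf1d (x + t • w) v s h2 h3
    have a2 := hf1d x v s hx h1
    have b1 := hf1d (x + s • v) w t h1 h3'
    have b2 := hf1d x w t hx h2
    have eg : (s * t) • g (s, t) =
        (f (x + t • w + s • v) - f (x + t • w)) - (f (x + s • v) - f x) := by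
      rw [mul_smul]
      simp only [hgdef]
      rw [← d1, smul_sub, ← a1, ← a2]
    have eh : (t * s) • h (s, t) =
        (f (x + s • v + t • w) - f (x + s • v)) - (f (x + t • w) - f x) := by
      rw [mul_smul]
      simp only [hhdef]
      rw [← d2, smul_sub, ← b1, ← b2]
    refine hcancel (s * t) (hs.mul ht) _ _ ?_
    rw [eg, mul_comm, eh, add_right_comm x (s • v) (t • w)]
    abel
  -- Pass to the limit (0,0) using density of units and T2
  set T : Set (K × K) := S ∩ {p : K × K | IsUnit p.1 ∧ IsUnit p.2} with hTdef
  have hdT : ((0 : K), (0 : K)) ∈ closure T := by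
    have hd : Dense {p : K × K | IsUnit p.1 ∧ IsUnit p.2} := hdense.prod hdense
    exact hd.open_subset_closure_inter hSopen h0S
  haveI hne : (nhdsWithin ((0 : K), (0 : K)) T).NeBot :=
    mem_closure_iff_nhdsWithin_neBot.mp hdT
  have lg : Filter.Tendsto g (nhdsWithin ((0 : K), (0 : K)) T) (nhds (g (0, 0))) :=
    (hg _ h0S).mono Set.inter_subset_left
  have lh : Filter.Tendsto h (nhdsWithin ((0 : K), (0 : K)) T) (nhds (h (0, 0))) :=
    (hh _ h0S).mono Set.inter_subset_left
  have heq : g =ᶠ[nhdsWithin ((0 : K), (0 : K)) T] h := by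
    filter_upwards [self_mem_nhdsWithin] with p hp
    exact key p hp.1 hp.2.1 hp.2.2
  have : g (0, 0) = h (0, 0) := tendsto_nhds_unique lg (lh.congr' heq.symm)
  simpa [hgdef, hhdef] using this
end

section
/- If U is an open neighborhood of 0 in a topological K-module V, 2 is not assumed invertible, K has dense unit group, and f : U → W is of class C² and homogeneous of degree 2 (f(rx) = r²f(x) whenever x, rx ∈ U), then f is a W-valued quadratic form: f(v+w) − f(v) − f(w) is bilinear in (v,w) and f(rv) = r²f(v). -/
open Topology Filter

private lemma aux_limit {K W : Type*} [CommRing K] [TopologicalSpace K]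
    [AddCommGroup W] [TopologicalSpace W] [T2Space W]
    (hdense : Dense {t : K | IsUnit t}) {S : Set K} (hS : IsOpen S) (h0 : (0 : K) ∈ S)
    (g : K → W) (hg : ContinuousWithinAt g S 0) (c : W)
    (hgc : ∀ t ∈ S, IsUnit t → g t = c) : g 0 = c := by
  have hmem : (0 : K) ∈ closure {t : K | IsUnit t} := hdense 0
  have hne : (𝓝[{t : K | IsUnit t}] (0 : K)).NeBot :=
    mem_closure_iff_nhdsWithin_neBot.mp hmem
  have hSnhds : S ∈ 𝓝[{t : K | IsUnit t}] (0 : K) :=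
    nhdsWithin_le_nhds (hS.mem_nhds h0)
  have heq : 𝓝[{t : K | IsUnit t} ∩ S] (0 : K) = 𝓝[{t : K | IsUnit t}] (0 : K) :=
    nhdsWithin_inter_of_mem' hSnhds
  have hne2 : (𝓝[{t : K | IsUnit t} ∩ S] (0 : K)).NeBot := by rw [heq]; exact hne
  have h1 : Filter.Tendsto g (𝓝[{t : K | IsUnit t} ∩ S] (0 : K)) (𝓝 (g 0)) :=
    hg.tendsto.mono_left (nhdsWithin_mono _ Set.inter_subset_right)
  have h2 : Filter.Tendsto g (𝓝[{t : K | IsUnit t} ∩ S] (0 : K)) (𝓝 c) := by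
    refine Filter.Tendsto.congr' ?_ tendsto_const_nhds
    filter_upwards [self_mem_nhdsWithin] with t ht
    exact (hgc t ht.2 ht.1).symm
  exact tendsto_nhds_unique h1 h2

/-- If `f : U → W` is `C²` (in the sense of admitting a second order Taylor expansion
with continuous remainder vanishing at `t = 0` and with bilinear polarized second-order
coefficient) on an open neighborhood `U` of `0` and homogeneous of degree `2`, then `f`
is a `W`-valued quadratic form: `f(v+w) − f(v) − f(w)` is bilinear and `f(rv) = r²f(v)`. -/
theorem homogeneous_degree_two_is_quadratic
    {K : Type*} [CommRing K] [TopologicalSpace K] [IsTopologicalRing K]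
    {V W : Type*}
    [AddCommGroup V] [Module K V] [TopologicalSpace V]
    [IsTopologicalAddGroup V] [ContinuousSMul K V]
    [AddCommGroup W] [Module K W] [TopologicalSpace W]
    [IsTopologicalAddGroup W] [ContinuousSMul K W] [T2Space W]
    (hdense : Dense {t : K | IsUnit t})
    {U : Set V} (hU : IsOpen U) (h0 : (0 : V) ∈ U)
    (f : V → W) (df : V → V → W) (a2 : V → V → W) (R2 : V → V → K → W)
    (htaylor : ∀ (x h : V) (t : K), x ∈ U → x + t • h ∈ U →
      f (x + t • h) = f x + t • df x h + t ^ 2 • a2 x h + t ^ 2 • R2 x h t)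
    (hR2c : ContinuousOn (fun p : V × V × K => R2 p.1 p.2.1 p.2.2)
      {p : V × V × K | p.1 ∈ U ∧ p.1 + p.2.2 • p.2.1 ∈ U})
    (hR20 : ∀ x h : V, R2 x h 0 = 0)
    (ha2c : ContinuousOn (fun p : V × V => a2 p.1 p.2) (U ×ˢ (Set.univ : Set V)))
    (d2 : V →ₗ[K] V →ₗ[K] W)
    (hpol : ∀ v w : V, a2 0 (v + w) - a2 0 v - a2 0 w = d2 v w)
    (hhom : ∀ (r : K) (x : V), x ∈ U → r • x ∈ U → f (r • x) = r ^ 2 • f x) :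
    (∀ v w : V, v ∈ U → w ∈ U → v + w ∈ U → f (v + w) - f v - f w = d2 v w) ∧
    (∀ (r : K) (v : V), v ∈ U → r • v ∈ U → f (r • v) = r ^ 2 • f v) := by
  -- f 0 = 0
  have hf0 : f 0 = 0 := by
    have := hhom 0 0 h0 (by simpa using h0)
    simpa using this
  -- main claim: f h = a2 0 h on U
  have key : ∀ h ∈ U, f h = a2 0 h := by
    intro h hh
    set S : Set K := {t : K | t • h ∈ U} with hSdef
    have hSopen : IsOpen S := hU.preimage (by continuity)
    have hS0 : (0 : K) ∈ S := by simp [hSdef, h0]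
    -- continuity of t ↦ R2 0 h t within S at 0
    have hRcont : ContinuousWithinAt (fun t : K => R2 0 h t) S 0 := by
      have hmap : Set.MapsTo (fun t : K => ((0 : V), h, t)) S
          {p : V × V × K | p.1 ∈ U ∧ p.1 + p.2.2 • p.2.1 ∈ U} := by
        intro t ht
        refine ⟨h0, ?_⟩
        simpa [hSdef] using ht
      have := (hR2c ((0 : V), h, (0 : K)) ⟨h0, by simpa using h0⟩).comp
        (f := fun t : K => ((0 : V), h, t))
        (continuous_const.prodMk (continuous_const.prodMk continuous_id)).continuousWithinAt
        hmap
      exact this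
    -- Taylor + homogeneity for unit t ∈ S
    have hrel : ∀ t ∈ S, IsUnit t →
        t • f h = df 0 h + t • a2 0 h + t • R2 0 h t := by
      intro t ht hu
      have h1 := htaylor 0 h t h0 (by simpa [hSdef] using ht)
      have h2 := hhom t h hh ht
      rw [zero_add] at h1
      rw [h2, hf0, zero_add] at h1
      -- h1 : t^2 • f h = t • df 0 h + t^2 • a2 0 h + t^2 • R2 0 h t
      have h3 : t • (t • f h) = t • (df 0 h + t • a2 0 h + t • R2 0 h t) := by
        rw [smul_smul, ← pow_two]
        rw [h1]
        simp only [smul_add, smul_smul, ← pow_two]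
      exact hu.smul_left_cancel.mp h3
    -- df 0 h = 0
    have hdf : df 0 h = 0 := by
      have := aux_limit hdense hSopen hS0
        (fun t => t • f h - t • a2 0 h - t • R2 0 h t) ?_ (df 0 h) ?_
      · simpa using this.symm
      · exact ((continuousWithinAt_id.smul continuousWithinAt_const).sub
          (continuousWithinAt_id.smul continuousWithinAt_const)).sub
          (continuousWithinAt_id.smul hRcont)
      · intro t ht hu
        have h7 := hrel t ht hu
        show t • f h - t • a2 0 h - t • R2 0 h t = df 0 h
        rw [h7]; abel
    -- f h = a2 0 h
    have := aux_limit hdense hSopen hS0 (fun t => R2 0 h t) hRcont (f h - a2 0 h) ?_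
    · have h4 := this
      rw [hR20] at h4
      have : f h - a2 0 h = 0 := h4.symm
      linear_combination (norm := abel) this
    · intro t ht hu
      have h5 := hrel t ht hu
      rw [hdf, zero_add] at h5
      have h6 : t • R2 0 h t = t • (f h - a2 0 h) := by
        rw [smul_sub]
        linear_combination (norm := abel) h5.symm
      exact hu.smul_left_cancel.mp h6
  refine ⟨?_, hhom⟩
  intro v w hv hw hvw
  rw [key _ hvw, key _ hv, key _ hw, hpol]
end

section
/- For a C²-map f : U → W over K, the second-order Taylor coefficient satisfies the polarization identity a₂(x, v+w) − a₂(x,v) − a₂(x,w) = d²f(x)(v,w), where d²f(x)(v,w) = ∂_v ∂_w f(x); in particular 2·a₂(x,h) = d²f(x)(h,h). -/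
open Filter Set Topology

private lemma taylor_dense_limit {K W : Type*} [CommRing K] [TopologicalSpace K]
    [AddCommGroup W] [TopologicalSpace W] [T2Space W]
    (hdense : Dense {t : K | IsUnit t})
    {O : Set K} (hO : IsOpen O) (h0 : (0 : K) ∈ O)
    {g : K → W} (hg : ContinuousOn g O)
    (hz : ∀ t ∈ O, IsUnit t → g t = 0) : g 0 = 0 := by
  have hsub : O ⊆ closure (O ∩ {t : K | IsUnit t}) :=
    hdense.open_subset_closure_inter hO
  have hne : (𝓝[O ∩ {t : K | IsUnit t}] (0 : K)).NeBot :=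
    mem_closure_iff_nhdsWithin_neBot.mp (hsub h0)
  have h1 : Tendsto g (𝓝[O ∩ {t : K | IsUnit t}] (0 : K)) (𝓝 (g 0)) :=
    (hg 0 h0).mono inter_subset_left
  have h2 : Tendsto g (𝓝[O ∩ {t : K | IsUnit t}] (0 : K)) (𝓝 0) := by
    refine Tendsto.congr' ?_ tendsto_const_nhds
    filter_upwards [self_mem_nhdsWithin] with t ht
    exact (hz t ht.1 ht.2).symm
  exact tendsto_nhds_unique h1 h2

private lemma taylor_unit_cancel {K W : Type*} [CommRing K] [AddCommGroup W] [Module K W]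
    {t : K} (ht : IsUnit t) {z : W} (h : t • z = 0) : z = 0 := by
  obtain ⟨u, rfl⟩ := ht
  calc z = ((↑u⁻¹ : K) * ↑u) • z := by rw [u.inv_mul, one_smul]
    _ = (↑u⁻¹ : K) • ((u : K) • z) := mul_smul _ _ _
    _ = 0 := by rw [h, smul_zero]

private lemma taylor_key {K W : Type*} [CommRing K] [TopologicalSpace K] [IsTopologicalRing K]
    [AddCommGroup W] [Module K W] [TopologicalSpace W]
    [IsTopologicalAddGroup W] [ContinuousSMul K W] [T2Space W]
    (hdense : Dense {t : K | IsUnit t})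
    {O : Set K} (hO : IsOpen O) (h0 : (0 : K) ∈ O)
    {A : W} {G : K → W} (hG : ContinuousOn G O)
    (heq : ∀ t ∈ O, t • A + t ^ 2 • G t = 0) : G 0 = 0 := by
  have hunit : ∀ t ∈ O, IsUnit t → A + t • G t = 0 := by
    intro t ht hu
    refine taylor_unit_cancel hu ?_
    rw [smul_add, smul_smul, ← pow_two]
    exact heq t ht
  have hA : A = 0 := by
    have hH : ContinuousOn (fun t : K => A + t • G t) O :=
      continuousOn_const.add (continuousOn_id.smul hG)
    have := taylor_dense_limit hdense hO h0 hH hunit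
    simpa using this
  refine taylor_dense_limit hdense hO h0 hG ?_
  intro t ht hu
  have := hunit t ht hu
  rw [hA, zero_add] at this
  exact taylor_unit_cancel hu this

/-- Polarization in the second order Taylor expansion of a `C²`-map:
`a₂(x,v+w) − a₂(x,v) − a₂(x,w) = d²f(x)(v,w)`, where
`d²f(x)(v,w) = f^[2]((x,v,0),(w,0,0),0)`; in particular `2·a₂(x,h) = d²f(x)(h,h)`. -/
theorem taylor_coefficient_polarization
    {K : Type*} [CommRing K] [TopologicalSpace K] [IsTopologicalRing K]
    {V W : Type*}
    [AddCommGroup V] [Module K V] [TopologicalSpace V]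
    [IsTopologicalAddGroup V] [ContinuousSMul K V]
    [AddCommGroup W] [Module K W] [TopologicalSpace W]
    [IsTopologicalAddGroup W] [ContinuousSMul K W] [T2Space W]
    (hdense : Dense {t : K | IsUnit t})
    {U : Set V} (hU : IsOpen U)
    (f : V → W) (f1 : V × V × K → W)
    (f2 : (V × V × K) × (V × V × K) × K → W)
    (a2 : V → V → W) (R2 : V → V → K → W)
    (hf1c : ContinuousOn f1 {p : V × V × K | p.1 ∈ U ∧ p.1 + p.2.2 • p.2.1 ∈ U})
    (hf1d : ∀ (x v : V) (t : K), x ∈ U → x + t • v ∈ U →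
      f (x + t • v) - f x = t • f1 (x, v, t))
    (hf2c : ContinuousOn f2 {q : (V × V × K) × (V × V × K) × K |
      (q.1.1 ∈ U ∧ q.1.1 + q.1.2.2 • q.1.2.1 ∈ U) ∧
      ((q.1 + q.2.2 • q.2.1).1 ∈ U ∧
        (q.1 + q.2.2 • q.2.1).1 + (q.1 + q.2.2 • q.2.1).2.2 • (q.1 + q.2.2 • q.2.1).2.1 ∈ U)})
    (hf2d : ∀ (p q : V × V × K) (t : K),
      (p.1 ∈ U ∧ p.1 + p.2.2 • p.2.1 ∈ U) →
      ((p + t • q).1 ∈ U ∧ (p + t • q).1 + (p + t • q).2.2 • (p + t • q).2.1 ∈ U) →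
      f1 (p + t • q) - f1 p = t • f2 (p, q, t))
    (htaylor : ∀ (x h : V) (t : K), x ∈ U → x + t • h ∈ U →
      f (x + t • h) = f x + t • f1 (x, h, 0) + t ^ 2 • a2 x h + t ^ 2 • R2 x h t)
    (hR2c : ContinuousOn (fun p : V × V × K => R2 p.1 p.2.1 p.2.2)
      {p : V × V × K | p.1 ∈ U ∧ p.1 + p.2.2 • p.2.1 ∈ U})
    (hR20 : ∀ x h : V, R2 x h 0 = 0) :
    (∀ x ∈ U, ∀ v w : V,
      a2 x (v + w) - a2 x v - a2 x w = f2 ((x, v, 0), (w, 0, 0), 0)) ∧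
    (∀ x ∈ U, ∀ h : V, (2 : K) • a2 x h = f2 ((x, h, 0), (h, 0, 0), 0)) := by
  -- Part 1: polarization
  have part1 : ∀ x ∈ U, ∀ v w : V,
      a2 x (v + w) - a2 x v - a2 x w = f2 ((x, v, 0), (w, 0, 0), 0) := by
    intro x hx v w
    set O : Set K := ((fun t : K => x + t • v) ⁻¹' U) ∩ ((fun t : K => x + t • w) ⁻¹' U)
        ∩ ((fun t : K => x + t • (v + w)) ⁻¹' U) with hOdef
    have hcv : Continuous fun t : K => x + t • v :=
      continuous_const.add (continuous_id.smul continuous_const)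
    have hcw : Continuous fun t : K => x + t • w :=
      continuous_const.add (continuous_id.smul continuous_const)
    have hcvw : Continuous fun t : K => x + t • (v + w) :=
      continuous_const.add (continuous_id.smul continuous_const)
    have hO : IsOpen O :=
      (((hU.preimage hcv).inter (hU.preimage hcw)).inter (hU.preimage hcvw))
    have h0 : (0 : K) ∈ O := by
      simp only [hOdef, Set.mem_inter_iff, Set.mem_preimage, zero_smul, add_zero]
      exact ⟨⟨hx, hx⟩, hx⟩
    set A : W := f1 (x, v + w, 0) - f1 (x, v, 0) - f1 (x, w, 0) with hAdef
    set G : K → W := fun t =>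
      (a2 x (v + w) - a2 x v - a2 x w) + (R2 x (v + w) t - R2 x v t - R2 x w t)
        - f2 ((x, v, t), (w, 0, 0), t) with hGdef
    have hmem : ∀ t ∈ O, x + t • v ∈ U ∧ x + t • w ∈ U ∧ x + t • (v + w) ∈ U :=
      fun t ht => ⟨ht.1.1, ht.1.2, ht.2⟩
    have hpt : ∀ t : K, x + t • w + t • v = x + t • (v + w) := by
      intro t; rw [smul_add]; abel
    -- continuity of G
    have hGc : ContinuousOn G O := by
      have r1 : ContinuousOn (fun t : K => R2 x (v + w) t) O := by
        refine (hR2c.comp ((continuous_const.prodMk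
          (continuous_const.prodMk continuous_id)).continuousOn) ?_)
        intro t ht
        exact ⟨hx, (hmem t ht).2.2⟩
      have r2 : ContinuousOn (fun t : K => R2 x v t) O := by
        refine (hR2c.comp ((continuous_const.prodMk
          (continuous_const.prodMk continuous_id)).continuousOn) ?_)
        intro t ht
        exact ⟨hx, (hmem t ht).1⟩
      have r3 : ContinuousOn (fun t : K => R2 x w t) O := by
        refine (hR2c.comp ((continuous_const.prodMk
          (continuous_const.prodMk continuous_id)).continuousOn) ?_)
        intro t ht
        exact ⟨hx, (hmem t ht).2.1⟩
      have r4 : ContinuousOn (fun t : K => f2 ((x, v, t), (w, 0, 0), t)) O := by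
        refine (hf2c.comp (Continuous.continuousOn (by fun_prop)) ?_)
        intro t ht
        refine ⟨⟨hx, (hmem t ht).1⟩, ?_, ?_⟩ <;>
          simp only [Prod.mk_add_mk, Prod.smul_mk, smul_zero, add_zero, smul_eq_mul,
            mul_zero, Set.mem_setOf_eq]
        · exact (hmem t ht).2.1
        · rw [hpt t]; exact (hmem t ht).2.2
      exact (continuousOn_const.add ((r1.sub r2).sub r3)).sub r4
    -- the algebraic identity
    have heq : ∀ t ∈ O, t • A + t ^ 2 • G t = 0 := by
      intro t ht
      obtain ⟨h1, h2, h3⟩ := hmem t ht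
      have e1 := htaylor x (v + w) t hx h3
      have e2 := htaylor x v t hx h1
      have e3 := htaylor x w t hx h2
      have e4 : f (x + t • (v + w)) - f (x + t • w) = t • f1 (x + t • w, v, t) := by
        have := hf1d (x + t • w) v t h2 (by rw [hpt t]; exact h3)
        rwa [hpt t] at this
      have e5 := hf1d x v t hx h1
      have e6 : f1 (x + t • w, v, t) - f1 (x, v, t) = t • f2 ((x, v, t), (w, 0, 0), t) := by
        have := hf2d (x, v, t) (w, 0, 0) t ⟨hx, h1⟩ (by
          refine ⟨?_, ?_⟩ <;>
            simp only [Prod.mk_add_mk, Prod.smul_mk, smul_zero, add_zero, smul_eq_mul,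
              mul_zero]
          · exact h2
          · rw [hpt t]; exact h3)
        simpa only [Prod.mk_add_mk, Prod.smul_mk, smul_zero, add_zero, smul_eq_mul,
          mul_zero] using this
      rw [hAdef, hGdef]
      linear_combination (norm := module) -e1 + e2 + e3 + e4 - e5 + t • e6
    have hG0 := taylor_key hdense hO h0 hGc heq
    rw [hGdef] at hG0
    simp only [hR20, sub_zero, sub_self, add_zero] at hG0
    exact sub_eq_zero.mp hG0
  -- homogeneity: a2 x (2•h) = 4 • a2 x h
  have hhom : ∀ x ∈ U, ∀ h : V, a2 x ((2 : K) • h) = (4 : K) • a2 x h := by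
    intro x hx h
    set O : Set K := (fun t : K => x + t • ((2 : K) • h)) ⁻¹' U with hOdef
    have hO : IsOpen O := hU.preimage (continuous_const.add (continuous_id.smul continuous_const))
    have h0 : (0 : K) ∈ O := by
      simp only [hOdef, Set.mem_preimage, zero_smul, add_zero]; exact hx
    have hpt : ∀ t : K, x + (2 * t) • h = x + t • ((2 : K) • h) := by
      intro t; rw [smul_smul, mul_comm]
    set A : W := f1 (x, (2 : K) • h, 0) - (2 : K) • f1 (x, h, 0) with hAdef
    set G : K → W := fun t =>
      (a2 x ((2 : K) • h) - (4 : K) • a2 x h)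
        + (R2 x ((2 : K) • h) t - (4 : K) • R2 x h (2 * t)) with hGdef
    have hGc : ContinuousOn G O := by
      have r1 : ContinuousOn (fun t : K => R2 x ((2 : K) • h) t) O := by
        refine (hR2c.comp ((continuous_const.prodMk
          (continuous_const.prodMk continuous_id)).continuousOn) ?_)
        intro t ht
        exact ⟨hx, ht⟩
      have r2 : ContinuousOn (fun t : K => R2 x h (2 * t)) O := by
        refine (hR2c.comp (Continuous.continuousOn (continuous_const.prodMk
          (continuous_const.prodMk (continuous_const.mul continuous_id)))) ?_)
        intro t ht
        refine ⟨hx, ?_⟩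
        show x + (2 * t) • h ∈ U
        rw [hpt t]; exact ht
      exact continuousOn_const.add (r1.sub (r2.const_smul _))
    have heq : ∀ t ∈ O, t • A + t ^ 2 • G t = 0 := by
      intro t ht
      have e1 := htaylor x ((2 : K) • h) t hx ht
      have e2 := htaylor x h (2 * t) hx (by rw [hpt t]; exact ht)
      rw [hpt t] at e2
      rw [hAdef, hGdef]
      linear_combination (norm := module) e2 - e1
    have hG0 := taylor_key hdense hO h0 hGc heq
    rw [hGdef] at hG0
    simp only [mul_zero, hR20, smul_zero, sub_zero, add_zero] at hG0
    exact sub_eq_zero.mp hG0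
  refine ⟨part1, ?_⟩
  intro x hx h
  have h1 := part1 x hx h h
  rw [← two_smul K h, hhom x hx h] at h1
  rw [← h1]
  module
end

section
/- Let f : U → W be smooth over K, where U ⊆ V open. Define Tf : U × V → W × W by Tf(x,v) = (f(x), df(x)v). Identifying U × V with {x + εv} ⊆ V ⊗_K K[ε] and W × W with W ⊗_K K[ε], the map Tf is of class C¹ over the ring of dual numbers K[ε], and (Tf)^[1] = T(f^[1]) under the canonical identifications. -/
/-- The scalar action of the dual numbers `K[ε]` on the scalar extension
`M ⊗ K[ε] = M ⊕ εM`, realized on `M × M`: `(a + εb)·(v + εw) = av + ε(aw + bv)`. -/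
def dualSMul {K M : Type*} [CommRing K] [AddCommGroup M] [Module K M]
    (a : DualNumber K) (p : M × M) : M × M :=
  (a.fst • p.1, a.fst • p.2 + a.snd • p.1)

section Aux

variable {K : Type*} [CommRing K] [TopologicalSpace K] [IsTopologicalRing K]
    {V W : Type*}
    [AddCommGroup V] [Module K V] [TopologicalSpace V]
    [IsTopologicalAddGroup V] [ContinuousSMul K V]
    [AddCommGroup W] [Module K W] [TopologicalSpace W]
    [IsTopologicalAddGroup W] [ContinuousSMul K W] [T2Space W]

/-- The key second-order identity: `f1(x + aw, v + as + bw, 0) - f1(x, v, 0)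
= a • f2((x,w,a),(v,s,b),0) + b • f1(x,w,a)`, proved by a limit argument along
invertible scalars `τ → 0`. -/
theorem tangent_aux
    (hdense : Dense {t : K | IsUnit t})
    {U : Set V} (hU : IsOpen U)
    (f : V → W) (f1 : V × V × K → W)
    (f2 : (V × V × K) × (V × V × K) × K → W)
    (hf1c : ContinuousOn f1 {p : V × V × K | p.1 ∈ U ∧ p.1 + p.2.2 • p.2.1 ∈ U})
    (hf1d : ∀ (x v : V) (t : K), x ∈ U → x + t • v ∈ U →
      f (x + t • v) - f x = t • f1 (x, v, t))
    (hf2c : ContinuousOn f2 {q : (V × V × K) × (V × V × K) × K |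
      (q.1.1 ∈ U ∧ q.1.1 + q.1.2.2 • q.1.2.1 ∈ U) ∧
      ((q.1 + q.2.2 • q.2.1).1 ∈ U ∧
        (q.1 + q.2.2 • q.2.1).1 + (q.1 + q.2.2 • q.2.1).2.2 • (q.1 + q.2.2 • q.2.1).2.1 ∈ U)})
    (hf2d : ∀ (p q : V × V × K) (t : K),
      (p.1 ∈ U ∧ p.1 + p.2.2 • p.2.1 ∈ U) →
      ((p + t • q).1 ∈ U ∧ (p + t • q).1 + (p + t • q).2.2 • (p + t • q).2.1 ∈ U) →
      f1 (p + t • q) - f1 p = t • f2 (p, q, t))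
    (x v w s : V) (a b : K) (hx : x ∈ U) (hxa : x + a • w ∈ U) :
    f1 (x + a • w, v + (a • s + b • w), 0) - f1 (x, v, 0)
      = a • f2 ((x, w, a), (v, s, b), 0) + b • f1 (x, w, a) := by
  classical
  -- the auxiliary point identity
  have Pid : ∀ τ : K, x + τ • v + (a + τ * b) • (w + τ • s)
      = x + a • w + τ • (v + (a • s + b • w) + τ • (b • s)) := by
    intro τ; module
  set S : Set K := {t : K | IsUnit t} with hS
  set C : Set K := {τ : K | x + τ • v ∈ U ∧ x + τ • v + (a + τ * b) • (w + τ • s) ∈ U}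
    with hC
  have hCopen : IsOpen C := by
    have hcont : Continuous fun τ : K =>
        ((x + τ • v, x + τ • v + (a + τ * b) • (w + τ • s)) : V × V) := by
      fun_prop
    have : C = (fun τ : K =>
        ((x + τ • v, x + τ • v + (a + τ * b) • (w + τ • s)) : V × V)) ⁻¹' (U ×ˢ U) := by
      ext τ; simp [hC, Set.mem_prod]
    rw [this]
    exact (hU.prod hU).preimage hcont
  have h0C : (0 : K) ∈ C := by
    simp only [hC, Set.mem_setOf_eq, zero_smul, add_zero, mul_zero, smul_zero]
    exact ⟨hx, by simpa using hxa⟩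
  have hL : (nhdsWithin (0 : K) (S ∩ C)).NeBot := by
    have h1 : nhdsWithin (0 : K) C = nhds 0 := hCopen.nhdsWithin_eq h0C
    have h2 : nhdsWithin (0 : K) (S ∩ C) = nhdsWithin 0 S := by
      rw [nhdsWithin_inter, h1, inf_eq_left]
      exact nhdsWithin_le_nhds
    rw [h2]
    exact mem_closure_iff_nhdsWithin_neBot.mp (hdense 0)
  set L := nhdsWithin (0 : K) (S ∩ C) with hLdef
  -- the two families
  set F : K → W := fun τ =>
    f1 (x + a • w, v + (a • s + b • w) + τ • (b • s), τ) - f1 (x, v, τ) with hF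
  set G : K → W := fun τ =>
    a • f2 ((x, w, a), (v, s, b), τ) + b • f1 (x + τ • v, w + τ • s, a + τ * b) with hG
  -- F = G on S ∩ C
  have hFG : ∀ τ ∈ S ∩ C, F τ = G τ := by
    rintro τ ⟨hτu, hτ1, hτ2⟩
    have hτ1' : x + τ • v ∈ U := hτ1
    have hτ2' : x + τ • v + (a + τ * b) • (w + τ • s) ∈ U := hτ2
    have hτ2'' : x + a • w + τ • (v + (a • s + b • w) + τ • (b • s)) ∈ U := by
      rw [← Pid]; exact hτ2'
    refine (hτu.smul_left_cancel (x := F τ) (y := G τ)).mp ?_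
    have hA : f (x + a • w + τ • (v + (a • s + b • w) + τ • (b • s))) - f (x + a • w)
        = τ • f1 (x + a • w, v + (a • s + b • w) + τ • (b • s), τ) :=
      hf1d _ _ _ hxa hτ2''
    have hB : f (x + τ • v) - f x = τ • f1 (x, v, τ) := hf1d x v τ hx hτ1'
    have hCe : f (x + a • w) - f x = a • f1 (x, w, a) := hf1d x w a hx hxa
    have hD : f (x + τ • v + (a + τ * b) • (w + τ • s)) - f (x + τ • v)
        = (a + τ * b) • f1 (x + τ • v, w + τ • s, a + τ * b) :=
      hf1d (x + τ • v) (w + τ • s) (a + τ * b) hτ1' hτ2'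
    have hE : f1 ((x, w, a) + τ • ((v, s, b) : V × V × K)) - f1 (x, w, a)
        = τ • f2 ((x, w, a), (v, s, b), τ) := by
      refine hf2d (x, w, a) (v, s, b) τ ⟨hx, hxa⟩ ?_
      refine ⟨hτ1', ?_⟩
      simpa [smul_eq_mul] using hτ2'
    have hE' : f1 (x + τ • v, w + τ • s, a + τ * b) - f1 (x, w, a)
        = τ • f2 ((x, w, a), (v, s, b), τ) := by
      simpa [Prod.add_def, Prod.smul_def, smul_eq_mul] using hE
    -- now compute τ • F τ and τ • G τ
    have key : τ • F τ = τ • G τ := by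
      rw [hF, hG]
      simp only [smul_sub, smul_add]
      rw [← hA, ← hB]
      have h1 : τ • a • f2 ((x, w, a), (v, s, b), τ)
          = a • (f1 (x + τ • v, w + τ • s, a + τ * b) - f1 (x, w, a)) := by
        rw [smul_comm τ a, ← hE']
      have h2 : τ • b • f1 (x + τ • v, w + τ • s, a + τ * b)
          = (τ * b) • f1 (x + τ • v, w + τ • s, a + τ * b) := by
        rw [mul_smul]
      rw [h1, h2]
      have h3 : a • (f1 (x + τ • v, w + τ • s, a + τ * b) - f1 (x, w, a))
          + (τ * b) • f1 (x + τ • v, w + τ • s, a + τ * b)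
          = (a + τ * b) • f1 (x + τ • v, w + τ • s, a + τ * b) - a • f1 (x, w, a) := by
        rw [smul_sub, add_smul]; abel
      rw [h3, ← hD, ← hCe, Pid τ]
      abel
    exact key
  -- limit of F
  have hmemD1 : ∀ τ ∈ S ∩ C,
      ((x + a • w, v + (a • s + b • w) + τ • (b • s), τ) : V × V × K)
        ∈ {p : V × V × K | p.1 ∈ U ∧ p.1 + p.2.2 • p.2.1 ∈ U} := by
    rintro τ ⟨-, hτ1, hτ2⟩
    refine ⟨hxa, ?_⟩
    show x + a • w + τ • (v + (a • s + b • w) + τ • (b • s)) ∈ U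
    rw [← Pid]; exact hτ2
  have hmemD1' : ∀ τ ∈ S ∩ C, ((x, v, τ) : V × V × K)
      ∈ {p : V × V × K | p.1 ∈ U ∧ p.1 + p.2.2 • p.2.1 ∈ U} := by
    rintro τ ⟨-, hτ1, -⟩
    exact ⟨hx, hτ1⟩
  have hT0 : Filter.Tendsto (fun τ : K => τ) L (nhds 0) :=
    Filter.tendsto_id.mono_right nhdsWithin_le_nhds
  have htendF : Filter.Tendsto F L
      (nhds (f1 (x + a • w, v + (a • s + b • w), 0) - f1 (x, v, 0))) := by
    have c1 : Filter.Tendsto (fun τ : K =>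
        f1 (x + a • w, v + (a • s + b • w) + τ • (b • s), τ)) L
        (nhds (f1 (x + a • w, v + (a • s + b • w), 0))) := by
      have hpt : ((x + a • w, v + (a • s + b • w), 0) : V × V × K)
          ∈ {p : V × V × K | p.1 ∈ U ∧ p.1 + p.2.2 • p.2.1 ∈ U} := by
        refine ⟨hxa, ?_⟩
        simpa using hxa
      have hcw := hf1c _ hpt
      refine hcw.tendsto.comp ?_
      rw [tendsto_nhdsWithin_iff]
      constructor
      · have : Filter.Tendsto (fun τ : K =>
            ((x + a • w, v + (a • s + b • w) + τ • (b • s), τ) : V × V × K))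
            (nhds 0) (nhds (x + a • w, v + (a • s + b • w) + (0 : K) • (b • s), 0)) := by
          have hc : Continuous (fun τ : K =>
              ((x + a • w, v + (a • s + b • w) + τ • (b • s), τ) : V × V × K)) := by fun_prop
          exact hc.tendsto 0
        simp only [zero_smul, add_zero] at this
        exact this.comp hT0
      · filter_upwards [self_mem_nhdsWithin] with τ hτ using hmemD1 τ hτ
    have c2 : Filter.Tendsto (fun τ : K => f1 (x, v, τ)) L (nhds (f1 (x, v, 0))) := by
      have hpt : ((x, v, 0) : V × V × K)
          ∈ {p : V × V × K | p.1 ∈ U ∧ p.1 + p.2.2 • p.2.1 ∈ U} := by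
        refine ⟨hx, ?_⟩
        simpa using hx
      have hcw := hf1c _ hpt
      refine hcw.tendsto.comp ?_
      rw [tendsto_nhdsWithin_iff]
      constructor
      · have : Filter.Tendsto (fun τ : K => ((x, v, τ) : V × V × K))
            (nhds 0) (nhds (x, v, 0)) := by
          have hc : Continuous (fun τ : K => ((x, v, τ) : V × V × K)) := by fun_prop
          exact hc.tendsto 0
        exact this.comp hT0
      · filter_upwards [self_mem_nhdsWithin] with τ hτ using hmemD1' τ hτ
    exact c1.sub c2
  -- limit of G
  have htendG : Filter.Tendsto G L
      (nhds (a • f2 ((x, w, a), (v, s, b), 0) + b • f1 (x, w, a))) := by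
    have c3 : Filter.Tendsto (fun τ : K => f2 ((x, w, a), (v, s, b), τ)) L
        (nhds (f2 ((x, w, a), (v, s, b), 0))) := by
      have hpt : (((x, w, a), (v, s, b), 0) : (V × V × K) × (V × V × K) × K)
          ∈ {q : (V × V × K) × (V × V × K) × K |
            (q.1.1 ∈ U ∧ q.1.1 + q.1.2.2 • q.1.2.1 ∈ U) ∧
            ((q.1 + q.2.2 • q.2.1).1 ∈ U ∧
              (q.1 + q.2.2 • q.2.1).1 + (q.1 + q.2.2 • q.2.1).2.2 •
                (q.1 + q.2.2 • q.2.1).2.1 ∈ U)} := by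
        refine ⟨⟨hx, hxa⟩, ?_⟩
        simp only [zero_smul, add_zero, Prod.add_def, Prod.smul_def, smul_zero, smul_eq_mul,
          mul_zero]
        constructor
        · simpa using hx
        · simpa using hxa
      have hcw := hf2c _ hpt
      refine hcw.tendsto.comp ?_
      rw [tendsto_nhdsWithin_iff]
      constructor
      · have : Filter.Tendsto (fun τ : K =>
            ((((x, w, a), (v, s, b), τ)) : (V × V × K) × (V × V × K) × K))
            (nhds 0) (nhds ((x, w, a), (v, s, b), 0)) := by
          have hc : Continuous (fun τ : K =>
              ((((x, w, a), (v, s, b), τ)) : (V × V × K) × (V × V × K) × K)) := by fun_prop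
          exact hc.tendsto 0
        exact this.comp hT0
      · filter_upwards [self_mem_nhdsWithin] with τ hτ
        rcases hτ with ⟨-, hτ1, hτ2⟩
        refine ⟨⟨hx, hxa⟩, ?_⟩
        simp only [Prod.add_def, Prod.smul_def, smul_eq_mul]
        exact ⟨hτ1, hτ2⟩
    have c4 : Filter.Tendsto (fun τ : K => f1 (x + τ • v, w + τ • s, a + τ * b)) L
        (nhds (f1 (x, w, a))) := by
      have hpt : ((x, w, a) : V × V × K)
          ∈ {p : V × V × K | p.1 ∈ U ∧ p.1 + p.2.2 • p.2.1 ∈ U} := ⟨hx, hxa⟩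
      have hcw := hf1c _ hpt
      refine hcw.tendsto.comp ?_
      rw [tendsto_nhdsWithin_iff]
      constructor
      · have : Filter.Tendsto (fun τ : K => ((x + τ • v, w + τ • s, a + τ * b) : V × V × K))
            (nhds 0) (nhds (x + (0 : K) • v, w + (0 : K) • s, a + 0 * b)) := by
          have hc : Continuous (fun τ : K =>
              ((x + τ • v, w + τ • s, a + τ * b) : V × V × K)) := by fun_prop
          exact hc.tendsto 0
        simp only [zero_smul, add_zero, zero_mul] at this
        exact this.comp hT0
      · filter_upwards [self_mem_nhdsWithin] with τ hτ
        rcases hτ with ⟨-, hτ1, hτ2⟩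
        exact ⟨hτ1, hτ2⟩
    exact (c3.const_smul a).add (c4.const_smul b)
  have hFG' : F =ᶠ[L] G := by
    filter_upwards [self_mem_nhdsWithin] with τ hτ using hFG τ hτ
  have := tendsto_nhds_unique ((Filter.tendsto_congr' hFG').mp htendF) htendG
  exact this

end Aux

/-- If `f : U → W` is smooth over `K` (here: with `C²`-data `f^[1]`, `f^[2]`), then the
tangent map `Tf(x,v) = (f(x), df(x)v)`, viewed on `U ⊕ εV ⊆ V ⊗ K[ε]` with values in
`W ⊗ K[ε]`, is of class `C¹` over the dual numbers `K[ε]`, with difference quotient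
map `(Tf)^[1] = T(f^[1])` under the canonical identifications. -/
theorem tangent_map_C1_over_dual_numbers
    {K : Type*} [CommRing K] [TopologicalSpace K] [IsTopologicalRing K]
    {V W : Type*}
    [AddCommGroup V] [Module K V] [TopologicalSpace V]
    [IsTopologicalAddGroup V] [ContinuousSMul K V]
    [AddCommGroup W] [Module K W] [TopologicalSpace W]
    [IsTopologicalAddGroup W] [ContinuousSMul K W] [T2Space W]
    (hdense : Dense {t : K | IsUnit t})
    {U : Set V} (hU : IsOpen U)
    (f : V → W) (f1 : V × V × K → W)
    (f2 : (V × V × K) × (V × V × K) × K → W)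
    (hf1c : ContinuousOn f1 {p : V × V × K | p.1 ∈ U ∧ p.1 + p.2.2 • p.2.1 ∈ U})
    (hf1d : ∀ (x v : V) (t : K), x ∈ U → x + t • v ∈ U →
      f (x + t • v) - f x = t • f1 (x, v, t))
    (hf2c : ContinuousOn f2 {q : (V × V × K) × (V × V × K) × K |
      (q.1.1 ∈ U ∧ q.1.1 + q.1.2.2 • q.1.2.1 ∈ U) ∧
      ((q.1 + q.2.2 • q.2.1).1 ∈ U ∧
        (q.1 + q.2.2 • q.2.1).1 + (q.1 + q.2.2 • q.2.1).2.2 • (q.1 + q.2.2 • q.2.1).2.1 ∈ U)})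
    (hf2d : ∀ (p q : V × V × K) (t : K),
      (p.1 ∈ U ∧ p.1 + p.2.2 • p.2.1 ∈ U) →
      ((p + t • q).1 ∈ U ∧ (p + t • q).1 + (p + t • q).2.2 • (p + t • q).2.1 ∈ U) →
      f1 (p + t • q) - f1 p = t • f2 (p, q, t)) :
    ContinuousOn
      (fun q : (V × V) × (V × V) × DualNumber K =>
        ((f1 (q.1.1, q.2.1.1, q.2.2.fst),
          f2 ((q.1.1, q.2.1.1, q.2.2.fst), (q.1.2, q.2.1.2, q.2.2.snd), 0)) : W × W))
      {q : (V × V) × (V × V) × DualNumber K |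
        q.1.1 ∈ U ∧ q.1.1 + q.2.2.fst • q.2.1.1 ∈ U} ∧
    (∀ (z u : V × V) (t : DualNumber K), z.1 ∈ U → z.1 + t.fst • u.1 ∈ U →
      ((f ((z + dualSMul t u).1), f1 ((z + dualSMul t u).1, (z + dualSMul t u).2, 0)) : W × W)
        - (f z.1, f1 (z.1, z.2, 0))
      = dualSMul t
          ((f1 (z.1, u.1, t.fst),
            f2 ((z.1, u.1, t.fst), (z.2, u.2, t.snd), 0)) : W × W)) := by
  constructor
  · -- continuity part
    have hg : Continuous fun q : (V × V) × (V × V) × DualNumber K =>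
        ((q.1.1, q.2.1.1, q.2.2.fst) : V × V × K) := by
      refine Continuous.prodMk (continuous_fst.comp continuous_fst) ?_
      exact Continuous.prodMk (continuous_fst.comp (continuous_fst.comp continuous_snd))
        (TrivSqZeroExt.continuous_fst.comp (continuous_snd.comp continuous_snd))
    have hh : Continuous fun q : (V × V) × (V × V) × DualNumber K =>
        ((((q.1.1, q.2.1.1, q.2.2.fst), (q.1.2, q.2.1.2, q.2.2.snd), 0))
          : (V × V × K) × (V × V × K) × K) := by
      refine Continuous.prodMk hg (Continuous.prodMk ?_ continuous_const)
      refine Continuous.prodMk (continuous_snd.comp continuous_fst) ?_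
      exact Continuous.prodMk (continuous_snd.comp (continuous_fst.comp continuous_snd))
        (TrivSqZeroExt.continuous_snd.comp (continuous_snd.comp continuous_snd))
    refine ContinuousOn.prodMk ?_ ?_
    · refine hf1c.comp hg.continuousOn ?_
      rintro q ⟨h1, h2⟩
      exact ⟨h1, h2⟩
    · refine hf2c.comp hh.continuousOn ?_
      rintro q ⟨h1, h2⟩
      refine ⟨⟨h1, h2⟩, ?_⟩
      simp only [Prod.add_def, Prod.smul_def, zero_smul, smul_zero, add_zero, smul_eq_mul,
        zero_mul, mul_zero, Set.mem_setOf_eq]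
      constructor
      · simpa using h1
      · simpa using h2
  · -- difference quotient part
    rintro ⟨x, v⟩ ⟨w, s⟩ t hz hzu
    simp only at hz hzu
    have key := tangent_aux hdense hU f f1 f2 hf1c hf1d hf2c hf2d x v w s t.fst t.snd hz hzu
    have h1 : f (x + t.fst • w) - f x = t.fst • f1 (x, w, t.fst) :=
      hf1d x w t.fst hz hzu
    show ((f (x + t.fst • w), f1 (x + t.fst • w, v + (t.fst • s + t.snd • w), 0)) : W × W)
        - (f x, f1 (x, v, 0))
      = (t.fst • f1 (x, w, t.fst),
          t.fst • f2 ((x, w, t.fst), (v, s, t.snd), 0) + t.snd • f1 (x, w, t.fst))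
    rw [Prod.sub_def]
    exact Prod.ext h1 key
end

section
/- In the k-th iterated dual-number ring T^kK = K[ε₁,…,ε_k] (all ε_i² = 0, commuting), let δ^{(j)} be the j-th elementary symmetric polynomial in ε₁,…,ε_k. Then δ^{(i)}·δ^{(j)} = C(i+j, i)·δ^{(i+j)} (with δ^{(m)} = 0 for m > k); in particular δ^j = j!·δ^{(j)} where δ = δ^{(1)}. -/
/-- The ideal `(X₁², …, X_k²)` of `K[X₁,…,X_k]`, so that the quotient is the iterated
dual number ring `T^k K = K[ε₁,…,ε_k]`. -/
noncomputable def sqIdeal (K : Type*) [CommRing K] (k : ℕ) : Ideal (MvPolynomial (Fin k) K) :=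
  Ideal.span (Set.range fun n : Fin k => (MvPolynomial.X n : MvPolynomial (Fin k) K) ^ 2)

open MvPolynomial Finset in

theorem esymm_mul_aux {K : Type*} [CommRing K] (k : ℕ) (i j : ℕ) :
    Ideal.Quotient.mk (sqIdeal K k) (esymm (Fin k) K i) *
      Ideal.Quotient.mk (sqIdeal K k) (esymm (Fin k) K j) =
    Nat.choose (i + j) i • Ideal.Quotient.mk (sqIdeal K k) (esymm (Fin k) K (i + j)) := by
  set Q := Ideal.Quotient.mk (sqIdeal K k) with hQ
  have hzero : ∀ S T : Finset (Fin k), ¬ Disjoint S T →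
      Q ((∏ n ∈ S, X n) * ∏ n ∈ T, X n) = 0 := by
    intro S T h
    obtain ⟨n, hnS, hnT⟩ := Finset.not_disjoint_iff.1 h
    rw [hQ, Ideal.Quotient.eq_zero_iff_mem]
    rw [← Finset.mul_prod_erase S _ hnS, ← Finset.mul_prod_erase T _ hnT]
    have : (X n * ∏ m ∈ S.erase n, X m) * (X n * ∏ m ∈ T.erase n, (X m : MvPolynomial (Fin k) K))
        = ((∏ m ∈ S.erase n, X m) * ∏ m ∈ T.erase n, X m) * (X n)^2 := by ring
    rw [this]
    exact Ideal.mul_mem_left _ _ (Ideal.subset_span ⟨n, rfl⟩)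
  set A := (powersetCard i (univ : Finset (Fin k)) ×ˢ powersetCard j univ).filter
      (fun p => Disjoint p.1 p.2) with hA
  have step1 : Q (esymm (Fin k) K i) * Q (esymm (Fin k) K j)
      = ∑ p ∈ A, Q (∏ n ∈ p.1 ∪ p.2, X n) := by
    rw [← map_mul, esymm, esymm, Finset.sum_mul_sum, ← Finset.sum_product', map_sum,
      hA, Finset.sum_filter]
    refine Finset.sum_congr rfl fun p _ => ?_
    by_cases h : Disjoint p.1 p.2
    · rw [if_pos h, Finset.prod_union h]
    · rw [if_neg h, hzero _ _ h]
  have maps : ∀ p ∈ A, p.1 ∪ p.2 ∈ powersetCard (i + j) (univ : Finset (Fin k)) := by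
    intro p hp
    rw [hA, Finset.mem_filter, Finset.mem_product, Finset.mem_powersetCard,
      Finset.mem_powersetCard] at hp
    rw [Finset.mem_powersetCard]
    exact ⟨Finset.subset_univ _, by
      rw [Finset.card_union_of_disjoint hp.2, hp.1.1.2, hp.1.2.2]⟩
  have step2 : ∑ p ∈ A, Q (∏ n ∈ p.1 ∪ p.2, X n)
      = ∑ U ∈ powersetCard (i + j) (univ : Finset (Fin k)),
          ∑ p ∈ A.filter (fun p => p.1 ∪ p.2 = U), Q (∏ n ∈ p.1 ∪ p.2, X n) :=
    (Finset.sum_fiberwise_of_maps_to maps _).symm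
  have fibcard : ∀ U ∈ powersetCard (i + j) (univ : Finset (Fin k)),
      (A.filter (fun p => p.1 ∪ p.2 = U)).card = (i + j).choose i := by
    intro U hU
    rw [Finset.mem_powersetCard] at hU
    have : (A.filter (fun p => p.1 ∪ p.2 = U)).card = (U.powersetCard i).card := by
      apply Finset.card_bij' (fun p _ => p.1) (fun S _ => (S, U \ S))
      · intro p hp
        rw [Finset.mem_filter, hA, Finset.mem_filter, Finset.mem_product,
          Finset.mem_powersetCard] at hp
        rw [Finset.mem_powersetCard]
        exact ⟨hp.2 ▸ Finset.subset_union_left, hp.1.1.1.2⟩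
      · intro S hS
        rw [Finset.mem_powersetCard] at hS
        rw [Finset.mem_filter, hA, Finset.mem_filter, Finset.mem_product,
          Finset.mem_powersetCard, Finset.mem_powersetCard]
        refine ⟨⟨⟨⟨hS.1.trans hU.1, hS.2⟩, ⟨Finset.subset_univ _, ?_⟩⟩,
          Finset.disjoint_sdiff⟩, Finset.union_sdiff_of_subset hS.1⟩
        rw [Finset.card_sdiff_of_subset hS.1, hU.2, hS.2, Nat.add_sub_cancel_left]
      · intro p hp
        rw [Finset.mem_filter, hA, Finset.mem_filter, Finset.mem_product] at hp
        have h2 : U \ p.1 = p.2 := by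
          rw [← hp.2, Finset.union_sdiff_cancel_left hp.1.2]
        exact Prod.ext rfl h2
      · intro S hS; rfl
    rw [this, Finset.card_powersetCard, hU.2]
  have step3 : ∀ U ∈ powersetCard (i + j) (univ : Finset (Fin k)),
      ∑ p ∈ A.filter (fun p => p.1 ∪ p.2 = U), Q (∏ n ∈ p.1 ∪ p.2, X n)
        = (i + j).choose i • Q (∏ n ∈ U, X n) := by
    intro U hU
    rw [← fibcard U hU, ← Finset.sum_const]
    refine Finset.sum_congr rfl fun p hp => ?_
    rw [(Finset.mem_filter.1 hp).2]
  rw [step1, step2, Finset.sum_congr rfl step3, ← Finset.smul_sum, esymm, map_sum]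

/-- In `T^k K = K[ε₁,…,ε_k]`, the elementary symmetric polynomials
`δ^{(j)} = Σ ε_{i₁}⋯ε_{i_j}` satisfy `δ^{(i)}·δ^{(j)} = C(i+j,i)·δ^{(i+j)}`; in
particular `δ^j = j!·δ^{(j)}` for `δ = δ^{(1)} = ε₁ + … + ε_k`. -/
theorem esymm_mul_in_iterated_dual_numbers {K : Type*} [CommRing K] (k : ℕ) :
    (∀ i j : ℕ,
      Ideal.Quotient.mk (sqIdeal K k) (MvPolynomial.esymm (Fin k) K i) *
        Ideal.Quotient.mk (sqIdeal K k) (MvPolynomial.esymm (Fin k) K j) =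
      Nat.choose (i + j) i •
        Ideal.Quotient.mk (sqIdeal K k) (MvPolynomial.esymm (Fin k) K (i + j))) ∧
    (∀ j : ℕ,
      Ideal.Quotient.mk (sqIdeal K k) (MvPolynomial.esymm (Fin k) K 1) ^ j =
        Nat.factorial j •
          Ideal.Quotient.mk (sqIdeal K k) (MvPolynomial.esymm (Fin k) K j)) := by
  constructor
  · exact fun i j => esymm_mul_aux k i j
  · intro j
    induction j with
    | zero => simp [MvPolynomial.esymm_zero]
    | succ n ih =>
        rw [pow_succ, ih, smul_mul_assoc, esymm_mul_aux k n 1,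
          Nat.choose_succ_self_right, smul_smul, Nat.factorial_succ, Nat.mul_comm]
end

section
/- Let L^b denote the K-module structure on E = W × V × W pushed forward from the product structure via f_b (for b : W × V → W bilinear), i.e., addition (u,v,w) +_b (u',v',w') = (u+u', v+v', w+w'+b(u,v')+b(u',v)) and scalar action r·_b(u,v,w) = (ru, rv, rw + (r²−r)b(u,v)). Then (E, +_b, ·_b) is a K-module, and f_c : (E, L^b) → (E, L^{b+c}) is a K-linear isomorphism for all bilinear c. -/
/-- The addition `+_b` of the linear structure `L^b` on `E = W × V × W` pushed forward
from the product structure via `f_b`. -/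
def addb {K V W : Type*} [CommRing K] [AddCommGroup V] [Module K V]
    [AddCommGroup W] [Module K W]
    (b : W →ₗ[K] V →ₗ[K] W) (p q : W × V × W) : W × V × W :=
  (p.1 + q.1, p.2.1 + q.2.1, p.2.2 + q.2.2 + b p.1 q.2.1 + b q.1 p.2.1)

/-- The scalar action `·_b` of the linear structure `L^b` on `E = W × V × W`. -/
def smulb {K V W : Type*} [CommRing K] [AddCommGroup V] [Module K V]
    [AddCommGroup W] [Module K W]
    (b : W →ₗ[K] V →ₗ[K] W) (r : K) (p : W × V × W) : W × V × W :=
  (r • p.1, r • p.2.1, r • p.2.2 + (r ^ 2 - r) • (b p.1 p.2.1))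

/-- The map `f_c(u,v,w) = (u,v,w + c(u,v))`. -/
def fcMap {K V W : Type*} [CommRing K] [AddCommGroup V] [Module K V]
    [AddCommGroup W] [Module K W]
    (c : W →ₗ[K] V →ₗ[K] W) (p : W × V × W) : W × V × W :=
  (p.1, p.2.1, p.2.2 + c p.1 p.2.1)

/-- `(E, +_b, ·_b)` is a `K`-module, and `f_c : (E, L^b) → (E, L^{b+c})` is a
`K`-linear isomorphism for all bilinear `c`. -/
theorem Lb_is_module_and_fc_linear_iso {K V W : Type*} [CommRing K]
    [AddCommGroup V] [Module K V] [AddCommGroup W] [Module K W]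
    (b : W →ₗ[K] V →ₗ[K] W) :
    (∀ p q : W × V × W, addb b p q = addb b q p) ∧
    (∀ p q r : W × V × W, addb b (addb b p q) r = addb b p (addb b q r)) ∧
    (∀ p : W × V × W, addb b p ((0 : W), (0 : V), (0 : W)) = p) ∧
    (∀ p : W × V × W, ∃ q : W × V × W, addb b p q = ((0 : W), (0 : V), (0 : W))) ∧
    (∀ (r : K) (p q : W × V × W), smulb b r (addb b p q) = addb b (smulb b r p) (smulb b r q)) ∧
    (∀ (r s : K) (p : W × V × W), smulb b (r + s) p = addb b (smulb b r p) (smulb b s p)) ∧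
    (∀ (r s : K) (p : W × V × W), smulb b (r * s) p = smulb b r (smulb b s p)) ∧
    (∀ p : W × V × W, smulb b (1 : K) p = p) ∧
    (∀ (c : W →ₗ[K] V →ₗ[K] W) (p q : W × V × W),
      fcMap c (addb b p q) = addb (b + c) (fcMap c p) (fcMap c q)) ∧
    (∀ (c : W →ₗ[K] V →ₗ[K] W) (r : K) (p : W × V × W),
      fcMap c (smulb b r p) = smulb (b + c) r (fcMap c p)) ∧
    (∀ c : W →ₗ[K] V →ₗ[K] W, Function.Bijective (fcMap c)) := by
  refine ⟨?_, ?_, ?_, ?_, ?_, ?_, ?_, ?_, ?_, ?_, ?_⟩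
  · intro p q
    simp only [addb, Prod.mk.injEq]
    and_intros <;> first | trivial | module | (match_scalars <;> ring)
  · intro p q r
    simp only [addb, map_add, LinearMap.add_apply, Prod.mk.injEq]
    and_intros <;> first | trivial | module | (match_scalars <;> ring)
  · intro p
    simp only [addb, map_zero, LinearMap.zero_apply, add_zero, Prod.mk.injEq]
  · intro p
    refine ⟨(-p.1, -p.2.1, -p.2.2 + b p.1 p.2.1 + b p.1 p.2.1), ?_⟩
    simp only [addb, map_neg, LinearMap.neg_apply, Prod.mk.injEq]
    and_intros <;> first | trivial | module | (match_scalars <;> ring)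
  · intro r p q
    simp only [addb, smulb, map_add, map_smul, LinearMap.add_apply,
      LinearMap.smul_apply, Prod.mk.injEq]
    and_intros <;> first | trivial | module | (match_scalars <;> ring)
  · intro r s p
    simp only [addb, smulb, map_smul, LinearMap.smul_apply, Prod.mk.injEq]
    and_intros <;> first | trivial | module | (match_scalars <;> ring)
  · intro r s p
    simp only [addb, smulb, map_smul, LinearMap.smul_apply, Prod.mk.injEq]
    and_intros <;> first | trivial | module | (match_scalars <;> ring)
  · intro p
    simp only [smulb, one_smul, one_pow, sub_self, zero_smul, add_zero]
  · intro c p q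
    simp only [fcMap, addb, map_add, LinearMap.add_apply, Prod.mk.injEq]
    and_intros <;> first | trivial | module | (match_scalars <;> ring)
  · intro c r p
    simp only [fcMap, smulb, map_add, map_smul, LinearMap.add_apply,
      LinearMap.smul_apply, Prod.mk.injEq]
    and_intros <;> first | trivial | module | (match_scalars <;> ring)
  · intro c
    refine Function.bijective_iff_has_inverse.mpr ⟨fcMap (-c), fun p => ?_, fun p => ?_⟩ <;>
      simp [fcMap]
end

section
/- Let M be a symmetric space with base point o: a set with map m : M × M → M, σ_x := m(x,·), satisfying σ_x(x) = x, σ_x² = id, and σ_x ∘ σ_y = σ_{σ_x(y)} ∘ σ_x. Define Q(x) = σ_x ∘ σ_o. Then the fundamental formula holds: Q(Q(x)y) = Q(x) Q(y) Q(x) for all x, y ∈ M. -/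
/-- The fundamental formula for the quadratic representation `Q(x) = σ_x ∘ σ_o` of a
reflection (symmetric) space `(M, m)` with base point `o`:
`Q(Q(x)y) = Q(x) Q(y) Q(x)`. -/
theorem fundamental_formula {M : Type*} (m : M → M → M) (o : M)
    (h1 : ∀ x, m x x = x)
    (h2 : ∀ x y, m x (m x y) = y)
    (h3 : ∀ x y z, m x (m y z) = m (m x y) (m x z)) :
    ∀ x y w : M,
      m (m x (m o y)) (m o w) =
        m x (m o (m y (m o (m x (m o w))))) := by
  have key : ∀ x y z : M, m (m x y) z = m x (m y (m x z)) := by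
    intro x y z
    rw [h3, h2]
  intro x y w
  rw [key, key]
end
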